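/- arXiv:2102.00770 — 2 statements merged into one kernel-verified Lean document; each statement's English description precedes it below -/
import Mathlib

section
/- Let e ≥ 4 and 0 < a < b < c < d ≤ e, and let B be the block of e-weight 4 with notation ⟨4^a, 5^{b−a}, 4^{c−b}, 5^{d−c}, 4^{e−d}⟩, which forms exactly two [4:1]-pairs, via the residues carried by runner a. and by runner c respectively. Then the unique partition lying in B that is exceptional for both pairs is ⟨a_{(1,1)}, c_{(1,1)}⟩. -/
/-- A partition: a weakly decreasing function `parts : ℕ → ℕ` (0-indexed),
having exactly `len` nonzero parts. -/
structure AbacusPartition where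
  parts : ℕ → ℕ
  antitone : Antitone parts
  len : ℕ
  pos_of_lt : ∀ i, i < len → 0 < parts i
  zero_of_ge : ∀ i, len ≤ i → parts i = 0

/-- The beta-set (abacus display) of a partition with `r` beads:
positions `λ_i + r - i` for `1 ≤ i ≤ r` (0-indexed: `parts i + (r - 1 - i)`). -/
def AbacusPartition.betaSet (lam : AbacusPartition) (r : ℕ) : Finset ℕ :=
  (Finset.range r).image (fun i => lam.parts i + (r - 1 - i))

/-- e-weight of the bead at position `p` of the display `B`: the number of
unoccupied positions `q < p` with `q ≡ p (mod e)`. -/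
def beadWeight (e : ℕ) (B : Finset ℕ) (p : ℕ) : ℕ :=
  ((Finset.range p).filter (fun q => q % e = p % e ∧ q ∉ B)).card

/-- Total e-weight of the display `B`. -/
def abacusWeight (e : ℕ) (B : Finset ℕ) : ℕ :=
  B.sum (fun p => beadWeight e B p)

/-- e-weight of a partition (computed from the display with `lam.len` beads). -/
def eWeight (e : ℕ) (lam : AbacusPartition) : ℕ :=
  abacusWeight e (lam.betaSet lam.len)

/-- Positions on runner `res` (positions `p` with `p % e = res`), in increasing
order, up to a bound strictly beyond every bead. -/
def posList (e : ℕ) (B : Finset ℕ) (res : ℕ) : List ℕ :=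
  (List.range (B.sup id + e + 2)).filter (fun p => p % e == res)

/-- One step of the signature-reduction automaton; the state is
`(list of surviving '+' positions, stack of pending '−' positions)`.
A '−' occurs at `p` when `p` is occupied and its preceding position unoccupied
(position `-1` counts as occupied); a '+' occurs at `p` when `p` is unoccupied
and its preceding position occupied.  A '+' cancels the most recent pending '−'. -/
def signStep (B : Finset ℕ) (st : List ℕ × List ℕ) (p : ℕ) : List ℕ × List ℕ :=
  if p ∈ B ∧ ¬(p = 0 ∨ p - 1 ∈ B) then (st.1, p :: st.2)
  else if p ∉ B ∧ (p = 0 ∨ p - 1 ∈ B) then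
    (match st.2 with
     | [] => (p :: st.1, ([] : List ℕ))
     | _ :: tl => (st.1, tl))
  else st

/-- Final state of the reduction of the `j`-signature on runner `res`:
`(surviving '+' (conormal) positions, surviving '−' (normal) positions)`,
each list in decreasing order of position. -/
def signState (e : ℕ) (B : Finset ℕ) (res : ℕ) : List ℕ × List ℕ :=
  (posList e B res).foldl (signStep B) ([], [])

/-- Positions of the normal beads on runner `res`, in decreasing order. -/
def normalList (e : ℕ) (B : Finset ℕ) (res : ℕ) : List ℕ := (signState e B res).2

/-- The conormal positions on runner `res`, in decreasing order. -/
def conormalList (e : ℕ) (B : Finset ℕ) (res : ℕ) : List ℕ := (signState e B res).1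

/-- ε: the number of normal beads on runner `res`. -/
def epsB (e : ℕ) (B : Finset ℕ) (res : ℕ) : ℕ := (normalList e B res).length

/-- φ: the number of conormal positions on runner `res`. -/
def phiB (e : ℕ) (B : Finset ℕ) (res : ℕ) : ℕ := (conormalList e B res).length

/-- ε_j of a partition: in the display with `lam.len` beads, residue `j`
is carried by runner `(j + lam.len) % e`. -/
def epsP (e : ℕ) (lam : AbacusPartition) (j : ℕ) : ℕ :=
  epsB e (lam.betaSet lam.len) ((j + lam.len) % e)

/-- φ_j of a partition. -/
def phiP (e : ℕ) (lam : AbacusPartition) (j : ℕ) : ℕ :=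
  phiB e (lam.betaSet lam.len) ((j + lam.len) % e)

/-- Move each bead in `ps` from its position `p` to `p - 1`. -/
def moveDown (B : Finset ℕ) (ps : List ℕ) : Finset ℕ :=
  ps.foldl (fun C p => insert (p - 1) (C.erase p)) B

/-- For each position `p` in `ps`, move the bead at `p - 1` to `p`. -/
def moveUp (B : Finset ℕ) (ps : List ℕ) : Finset ℕ :=
  ps.foldl (fun C p => insert p (C.erase (p - 1))) B

/-- Ẽ^t on displays: move the `t` normal beads at the smallest positions down. -/
def Etil (e : ℕ) (B : Finset ℕ) (res t : ℕ) : Finset ℕ :=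
  moveDown B ((normalList e B res).reverse.take t)

/-- F̃^t on displays: for the `t` largest conormal positions `p`,
move the bead at `p - 1` to `p`. -/
def Ftil (e : ℕ) (B : Finset ℕ) (res t : ℕ) : Finset ℕ :=
  moveUp B ((conormalList e B res).take t)

/-- Number of beads of `B` on runner `i`. -/
def runnerCount (e : ℕ) (B : Finset ℕ) (i : ℕ) : ℕ :=
  (B.filter (fun p => p % e = i)).card

/-- Sum of the e-weights of the beads of `B` on runner `i` (this is `|λ(i)|`). -/
def runnerWeight (e : ℕ) (B : Finset ℕ) (i : ℕ) : ℕ :=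
  (B.filter (fun p => p % e = i)).sum (beadWeight e B)

/-- The display of the e-core: slide every bead as far up its runner as possible. -/
def coreBeta (e : ℕ) (B : Finset ℕ) : Finset ℕ :=
  (Finset.range e).biUnion
    (fun i => (Finset.range (runnerCount e B i)).image (fun m => i + m * e))

/-- `lam` lies in the block with bead counts `bd 0, …, bd (e-1)` and e-weight `w`:
displayed with `r = bd 0 + ⋯ + bd (e-1)` beads it has `bd i` beads on runner `i`
and e-weight `w`. -/
def inBlock (e : ℕ) (bd : ℕ → ℕ) (w : ℕ) (lam : AbacusPartition) : Prop :=
  lam.len ≤ (Finset.range e).sum bd ∧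
  (∀ i < e, runnerCount e (lam.betaSet ((Finset.range e).sum bd)) i = bd i) ∧
  abacusWeight e (lam.betaSet ((Finset.range e).sum bd)) = w

/-- The single-runner beta-set of the partition with parts `ρ` and `c` beads. -/
def oneRunnerBeta (rho : List ℕ) (c : ℕ) : Finset ℕ :=
  (Finset.range c).image (fun t => rho.getD t 0 + (c - 1 - t))

/-- The display of the partition `⟨0_{lamOf 0}, …, (e−1)_{lamOf (e−1)} | bd 0, …, bd (e−1)⟩`. -/
def display (e : ℕ) (bd : ℕ → ℕ) (lamOf : ℕ → List ℕ) : Finset ℕ :=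
  (Finset.range e).biUnion
    (fun i => (oneRunnerBeta (lamOf i) (bd i)).image (fun m => i + m * e))

/-- The operator Ḟ at runner `res`: apply F̃^{φ} (valid when ε = 0 < φ). -/
def dotF (e : ℕ) (B : Finset ℕ) (res : ℕ) : Finset ℕ := Ftil e B res (phiB e B res)

/-- Apply a chain of Ḟ steps. -/
def chainFold (e : ℕ) : Finset ℕ → List ℕ → Finset ℕ
  | B, [] => B
  | B, i :: rest => chainFold e (dotF e B i) rest

/-- The chain of Ḟ steps is semisimple: at each step ε = 0 before, φ > 0 before,
and φ = 0 afterwards. -/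
def validChain (e : ℕ) : Finset ℕ → List ℕ → Prop
  | _, [] => True
  | B, i :: rest =>
      (epsB e B i = 0 ∧ 0 < phiB e B i ∧ phiB e (dotF e B i) i = 0) ∧
      validChain e (dotF e B i) rest

/-- `B` induces semisimply to `C` (displays with the same number of beads). -/
def InducesSS (e : ℕ) (B C : Finset ℕ) : Prop :=
  ∃ L : List ℕ, validChain e B L ∧ chainFold e B L = C

/-- Re-display a beta-set with `s` additional beads. -/
def shiftBeta (B : Finset ℕ) (s : ℕ) : Finset ℕ :=
  B.image (· + s) ∪ Finset.range s

/-- `B` induces semisimply to the partition displayed by `C` (where `C` may use a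
different number of beads). -/
def InducesToPartition (e : ℕ) (B C : Finset ℕ) : Prop :=
  ∃ D : Finset ℕ, InducesSS e B D ∧ shiftBeta D C.card = shiftBeta C D.card

/-- The block with bead counts `bd` and weight `w` is Rouquier:
for all `i < j < e`, `bd i − bd j ≥ w` or `bd j − bd i ≥ w − 1`. -/
def IsRouquier (e w : ℕ) (bd : ℕ → ℕ) : Prop :=
  ∀ i j, i < j → j < e → bd j + w ≤ bd i ∨ bd i + (w - 1) ≤ bd j

/-- `lam` is e-singular: it has `e` consecutive equal nonzero parts. -/
def ESingular (e : ℕ) (lam : AbacusPartition) : Prop :=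
  ∃ i, lam.parts i ≠ 0 ∧ ∀ m < e, lam.parts (i + m) = lam.parts i

/-- `lam` is e-regular. -/
def ERegular (e : ℕ) (lam : AbacusPartition) : Prop := ¬ ESingular e lam

/-- The induced e-sequence of the display `B`, as a multiset: each bead of
positive weight `w` at position `p` contributes `p, p−e, …, p−(w−1)e`. -/
def inducedSeq (e : ℕ) (B : Finset ℕ) : Multiset ℕ :=
  B.val.bind (fun p => (Multiset.range (beadWeight e B p)).map (fun m => p - m * e))

/-- The product order: `lam ≤_P mu` iff they have the same e-core and e-weight and
`s(mu)_r ≥ s(lam)_r` componentwise for all sufficiently large `r`. -/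
def ProdLE (e : ℕ) (lam mu : AbacusPartition) : Prop :=
  (∃ r, lam.len ≤ r ∧ mu.len ≤ r ∧
    coreBeta e (lam.betaSet r) = coreBeta e (mu.betaSet r)) ∧
  eWeight e lam = eWeight e mu ∧
  ∃ r0, ∀ r, r0 ≤ r →
    List.Forall₂ (· ≤ ·) ((inducedSeq e (lam.betaSet r)).sort (· ≤ ·))
      ((inducedSeq e (mu.betaSet r)).sort (· ≤ ·))

set_option maxRecDepth 100000


def rowSet (e : ℕ) (B : Finset ℕ) (i : ℕ) : Finset ℕ :=
  (B.filter (fun p => p % e = i)).image (fun p => p / e)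

def rowWeight (S : Finset ℕ) : ℕ := S.sum (fun m => ((Finset.range m).filter (· ∉ S)).card)

def lenStep (P Q : Finset ℕ) (st : ℕ × ℕ) (m : ℕ) : ℕ × ℕ :=
  if m ∈ Q ∧ m ∉ P then (st.1, st.2 + 1)
  else if m ∉ Q ∧ m ∈ P then
    (match st.2 with | 0 => (st.1 + 1, 0) | k+1 => (st.1, k))
  else st

def rowEps (P Q : Finset ℕ) (k : ℕ) : ℕ := ((List.range k).foldl (lenStep P Q) (0,0)).2

lemma mem_rowSet {e i : ℕ} (hi : i < e) (B : Finset ℕ) (m : ℕ) :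
    m ∈ rowSet e B i ↔ i + m * e ∈ B := by
  constructor
  · rintro hm
    simp only [rowSet, Finset.mem_image, Finset.mem_filter] at hm
    obtain ⟨p, ⟨hpB, hpi⟩, hpm⟩ := hm
    have : i + m * e = p := by
      subst hpi hpm; rw [Nat.mul_comm]; exact Nat.mod_add_div p e
    rwa [this]
  · intro h
    simp only [rowSet, Finset.mem_image, Finset.mem_filter]
    refine ⟨i + m * e, ⟨h, ?_⟩, ?_⟩
    · rw [Nat.add_mul_mod_self_right, Nat.mod_eq_of_lt hi]
    · rw [Nat.add_mul_div_right _ _ (by omega : 0 < e), Nat.div_eq_of_lt hi]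
      omega

lemma beadWeight_eq {e i : ℕ} (hi : i < e) (B : Finset ℕ) (m : ℕ) :
    beadWeight e B (i + m * e) = ((Finset.range m).filter (· ∉ rowSet e B i)).card := by
  unfold beadWeight
  rw [Nat.add_mul_mod_self_right, Nat.mod_eq_of_lt hi]
  apply Finset.card_bij' (fun q _ => q / e) (fun m' _ => i + m' * e)
  · intro q hq
    simp only [Finset.mem_filter, Finset.mem_range] at hq ⊢
    obtain ⟨hqlt, hqi, hqB⟩ := hq
    have hq' : i + (q / e) * e = q := by
      conv_rhs => rw [← Nat.mod_add_div q e, hqi, Nat.mul_comm]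
    constructor
    · by_contra hcon
      push_neg at hcon
      have : i + m * e ≤ i + (q/e) * e := by
        have := Nat.mul_le_mul_right e hcon
        omega
      omega
    · rw [mem_rowSet hi, hq']; exact hqB
  · intro m' hm'
    simp only [Finset.mem_filter, Finset.mem_range] at hm' ⊢
    obtain ⟨hlt, hns⟩ := hm'
    refine ⟨?_, ?_, ?_⟩
    · have := Nat.mul_lt_mul_right (by omega : 0 < e) |>.mpr hlt
      omega
    · rw [Nat.add_mul_mod_self_right, Nat.mod_eq_of_lt hi]
    · rw [← mem_rowSet hi]; exact hns
  · intro q hq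
    simp only [Finset.mem_filter, Finset.mem_range] at hq
    conv_rhs => rw [← Nat.mod_add_div q e, hq.2.1, Nat.mul_comm]
  · intro m' _
    rw [Nat.add_mul_div_right _ _ (by omega : 0 < e), Nat.div_eq_of_lt hi]
    omega

lemma filter_runner_eq {e i : ℕ} (hi : i < e) (B : Finset ℕ) :
    B.filter (fun p => p % e = i) = (rowSet e B i).image (fun m => i + m * e) := by
  ext p
  simp only [Finset.mem_filter, Finset.mem_image]
  constructor
  · rintro ⟨hpB, hpi⟩
    refine ⟨p / e, ?_, ?_⟩
    · rw [mem_rowSet hi]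
      have : i + (p / e) * e = p := by
        conv_rhs => rw [← Nat.mod_add_div p e, hpi, Nat.mul_comm]
      rwa [this]
    · conv_rhs => rw [← Nat.mod_add_div p e, hpi, Nat.mul_comm]
  · rintro ⟨m, hm, rfl⟩
    rw [mem_rowSet hi] at hm
    exact ⟨hm, by rw [Nat.add_mul_mod_self_right, Nat.mod_eq_of_lt hi]⟩

lemma runnerWeight_eq {e i : ℕ} (hi : i < e) (B : Finset ℕ) :
    runnerWeight e B i = rowWeight (rowSet e B i) := by
  unfold runnerWeight rowWeight
  rw [filter_runner_eq hi, Finset.sum_image (fun x _ y _ h => Nat.eq_of_mul_eq_mul_right (show 0 < e by omega) (Nat.add_left_cancel h))]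
  exact Finset.sum_congr rfl (fun m _ => beadWeight_eq hi B m)

lemma runnerCount_eq {e i : ℕ} (hi : i < e) (B : Finset ℕ) :
    runnerCount e B i = (rowSet e B i).card := by
  unfold runnerCount
  rw [filter_runner_eq hi, Finset.card_image_of_injOn (fun x _ y _ h => Nat.eq_of_mul_eq_mul_right (show 0 < e by omega) (Nat.add_left_cancel h))]

lemma abacusWeight_eq {e : ℕ} (he : 0 < e) (B : Finset ℕ) :
    abacusWeight e B = (Finset.range e).sum (fun i => runnerWeight e B i) := by
  unfold abacusWeight runnerWeight
  rw [← Finset.sum_fiberwise_of_maps_to (g := fun p => p % e) (t := Finset.range e)]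
  intro p _
  exact Finset.mem_range.mpr (Nat.mod_lt p he)


lemma subset_range_of_rowWeight {S : Finset ℕ} {n w : ℕ} (hc : S.card = n)
    (hw : rowWeight S ≤ w) : S ⊆ Finset.range (n + w) := by
  intro m hm
  rw [Finset.mem_range]
  have h1 : ((Finset.range m).filter (· ∉ S)).card ≤ w := by
    refine le_trans ?_ hw
    unfold rowWeight
    exact Finset.single_le_sum (f := fun k => ((Finset.range k).filter (· ∉ S)).card) (fun _ _ => Nat.zero_le _) hm
  have h2 : ((Finset.range m).filter (· ∈ S)).card + ((Finset.range m).filter (· ∉ S)).card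
      = m := by
    rw [Finset.card_filter_add_card_filter_not]; exact Finset.card_range m
  have h3 : (Finset.range m).filter (· ∈ S) ⊆ S.erase m := by
    intro x hx
    simp only [Finset.mem_filter, Finset.mem_range] at hx
    exact Finset.mem_erase.mpr ⟨by omega, hx.2⟩
  have h4 := Finset.card_le_card h3
  rw [Finset.card_erase_of_mem hm, hc] at h4
  have h5 : 0 < n := hc ▸ Finset.card_pos.mpr ⟨m, hm⟩
  omega

lemma eq_range_of_rowWeight_zero {S : Finset ℕ} (hw : rowWeight S = 0) :
    S = Finset.range S.card := by
  have hdc : ∀ m ∈ S, ∀ m' < m, m' ∈ S := by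
    intro m hm m' hm'
    by_contra hcon
    have h1 : 0 < ((Finset.range m).filter (· ∉ S)).card := by
      apply Finset.card_pos.mpr
      exact ⟨m', Finset.mem_filter.mpr ⟨Finset.mem_range.mpr hm', hcon⟩⟩
    have h2 : ((Finset.range m).filter (· ∉ S)).card ≤ rowWeight S := by
      unfold rowWeight
      exact Finset.single_le_sum (f := fun k => ((Finset.range k).filter (· ∉ S)).card) (fun _ _ => Nat.zero_le _) hm
    omega
  have hsub : S ⊆ Finset.range S.card := by
    intro m hm
    rw [Finset.mem_range]
    have : Finset.range (m + 1) ⊆ S := by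
      intro x hx
      rw [Finset.mem_range] at hx
      rcases Nat.lt_or_ge x m with h | h
      · exact hdc m hm x h
      · have : x = m := by omega
        rwa [this]
    have := Finset.card_le_card this
    rw [Finset.card_range] at this
    omega
  exact Finset.eq_of_subset_of_card_le hsub (by rw [Finset.card_range])

lemma foldl_noop {α β : Type*} (f : β → α → β) :
    ∀ (l : List α) (st : β), (∀ x ∈ l, ∀ s, f s x = s) → l.foldl f st = st := by
  intro l
  induction l with
  | nil => intro st _; rfl
  | cons x xs ih =>
    intro st h
    rw [List.foldl_cons, h x (by simp), ih st (fun y hy s => h y (by simp [hy]) s)]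

lemma filter_range_id (i : ℕ) : ∀ n : ℕ,
    (List.range n).filter (fun x => x == i) = if i < n then [i] else [] := by
  intro n
  induction n with
  | zero => simp
  | succ n ih =>
    rw [List.range_succ, List.filter_append, ih]
    by_cases h : i < n
    · simp only [if_pos h, if_pos (by omega : i < n + 1)]
      have : (n == i) = false := by simp; omega
      simp [this]
    · rcases Nat.lt_or_ge i (n+1) with h2 | h2
      · have : i = n := by omega
        subst this
        simp [if_neg h, if_pos h2]
      · simp only [if_neg h, if_neg (by omega : ¬ i < n + 1)]
        have : (n == i) = false := by simp; omega
        simp [this]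

lemma filter_range_mul {e i : ℕ} (hi : i < e) : ∀ K : ℕ,
    (List.range (K * e)).filter (fun p => p % e == i) =
      (List.range K).map (fun m => i + m * e) := by
  intro K
  induction K with
  | zero => simp
  | succ K ih =>
    rw [show (K + 1) * e = K * e + e by ring, List.range_add, List.filter_append, ih,
      List.range_succ, List.map_append]
    congr 1
    rw [List.filter_map]
    have h1 : ∀ x ∈ List.range e,
        ((fun p => p % e == i) ∘ (fun a => K * e + a)) x = (x == i) := by
      intro x hx
      rw [List.mem_range] at hx
      simp only [Function.comp]
      congr 1
      rw [Nat.add_comm, Nat.add_mul_mod_self_right, Nat.mod_eq_of_lt hx]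
    rw [List.filter_congr h1, filter_range_id, if_pos hi]
    simp [Nat.add_comm, Nat.mul_comm]


lemma signStep_rowStep {e i : ℕ} (h1 : 1 ≤ i) (hie : i < e) (B : Finset ℕ) (m : ℕ)
    (st : List ℕ × List ℕ) :
    (((signStep B st (i + m * e)).1.length, (signStep B st (i + m * e)).2.length) : ℕ × ℕ) =
      lenStep (rowSet e B (i-1)) (rowSet e B i) (st.1.length, st.2.length) m := by
  have hp1 : i + m * e - 1 = (i - 1) + m * e := by omega
  have hQ : (i + m * e ∈ B) ↔ m ∈ rowSet e B i := (mem_rowSet hie B m).symm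
  have hP : (i + m * e - 1 ∈ B) ↔ m ∈ rowSet e B (i-1) := by
    rw [hp1]; exact (mem_rowSet (show i - 1 < e by omega) B m).symm
  have h0 : (i + m * e = 0) ↔ False := iff_false_intro (by omega)
  unfold signStep lenStep
  simp only [hQ, hP, h0, false_or]
  split_ifs with hc1 hc2
  · rfl
  · cases h : st.2 with
    | nil => simp
    | cons x tl => simp
  · rfl

lemma sim_fold {e i : ℕ} (h1 : 1 ≤ i) (hie : i < e) (B : Finset ℕ) :
    ∀ (l : List ℕ) (st : List ℕ × List ℕ),
      (((l.map (fun m => i + m * e)).foldl (signStep B) st).1.length,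
       ((l.map (fun m => i + m * e)).foldl (signStep B) st).2.length) =
      l.foldl (lenStep (rowSet e B (i-1)) (rowSet e B i)) (st.1.length, st.2.length) := by
  intro l
  induction l with
  | nil => intro st; rfl
  | cons x xs ih =>
    intro st
    rw [List.map_cons, List.foldl_cons, List.foldl_cons, ih,
      signStep_rowStep h1 hie B x st]

lemma rowEps_stable {P Q : Finset ℕ} (hP : P ⊆ Finset.range 9) (hQ : Q ⊆ Finset.range 9)
    {k : ℕ} (hk : 9 ≤ k) : rowEps P Q k = rowEps P Q 9 := by
  unfold rowEps
  rw [show k = 9 + (k - 9) by omega, List.range_add, List.foldl_append]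
  congr 1
  apply foldl_noop
  intro x hx s
  simp only [List.mem_map, List.mem_range] at hx
  obtain ⟨y, _, rfl⟩ := hx
  have hxP : 9 + y ∉ P := fun h => by have := Finset.mem_range.mp (hP h); omega
  have hxQ : 9 + y ∉ Q := fun h => by have := Finset.mem_range.mp (hQ h); omega
  unfold lenStep
  rw [if_neg (by tauto), if_neg (by tauto)]

lemma epsB_eq {e i : ℕ} (h1 : 1 ≤ i) (hie : i < e) (he4 : 4 ≤ e) (B : Finset ℕ)
    (hsup : 3 ≤ B.sup id) (hP : rowSet e B (i-1) ⊆ Finset.range 9)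
    (hQ : rowSet e B i ⊆ Finset.range 9) :
    epsB e B i = rowEps (rowSet e B (i-1)) (rowSet e B i) 9 := by
  set N := B.sup id + e + 2 with hN
  have hNle : N ≤ N * e := Nat.le_mul_of_pos_right N (by omega)
  have hsplit : (List.range (N * e)).filter (fun p => p % e == i) =
      posList e B i ++
        ((List.range (N * e - N)).map (fun x => N + x)).filter (fun p => p % e == i) := by
    unfold posList
    rw [← List.filter_append, ← List.range_add]
    congr 2
    omega
  have hfold : (posList e B i).foldl (signStep B) ([], []) =
      ((List.range (N * e)).filter (fun p => p % e == i)).foldl (signStep B) ([], []) := by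
    rw [hsplit, List.foldl_append]
    refine (foldl_noop _ _ _ ?_).symm
    intro p hp s
    have hpN : N ≤ p := by
      simp only [List.mem_filter, List.mem_map, List.mem_range] at hp
      obtain ⟨⟨x, _, rfl⟩, _⟩ := hp
      omega
    have hpB : p ∉ B := fun h => by
      have := Finset.le_sup (f := id) h; simp only [id] at this; omega
    have hpB' : p - 1 ∉ B := fun h => by
      have := Finset.le_sup (f := id) h; simp only [id] at this; omega
    have hp0 : p ≠ 0 := by omega
    unfold signStep
    rw [if_neg (by tauto), if_neg (by tauto)]
  have key : epsB e B i =
      ((List.range N).foldl (lenStep (rowSet e B (i-1)) (rowSet e B i)) (0, 0)).2 := by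
    unfold epsB normalList signState
    rw [hfold, filter_range_mul hie N]
    exact congrArg Prod.snd (sim_fold h1 hie B (List.range N) ([], []))
  rw [key]
  have h9 : 9 ≤ N := by omega
  exact rowEps_stable hP hQ h9


def L4 : List (Finset ℕ) := [{0,1,2,3}, {0,1,2,4}, {0,1,2,5}, {0,1,2,6}, {0,1,2,7}, {0,1,3,4},
      {0,1,3,5}, {0,1,3,6}, {0,1,4,5}, {0,2,3,4}, {0,2,3,5}, {1,2,3,4}]

def L5 : List (Finset ℕ) := [{0,1,2,3,4}, {0,1,2,3,5}, {0,1,2,3,6}, {0,1,2,3,7}, {0,1,2,3,8},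
      {0,1,2,4,5}, {0,1,2,4,6}, {0,1,2,4,7}, {0,1,2,5,6}, {0,1,3,4,5}, {0,1,3,4,6}, {0,2,3,4,5}]

theorem classify4 : ∀ P ∈ (Finset.range 8).powerset, P.card = 4 → rowWeight P ≤ 4 → P ∈ L4 := by
  decide

theorem classify5 : ∀ Q ∈ (Finset.range 9).powerset, Q.card = 5 → rowWeight Q ≤ 4 → Q ∈ L5 := by
  decide

theorem pairA : ∀ P ∈ L4, ∀ Q ∈ L5, rowWeight P + rowWeight Q ≤ 2 →
    (2 ≤ rowEps P Q 9 ↔ (P = {0,1,2,3} ∧ Q = {0,1,2,4,5})) := by decide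

lemma mem_L4 {P : Finset ℕ} (hc : P.card = 4) (hw : rowWeight P ≤ 4) : P ∈ L4 :=
  classify4 P (Finset.mem_powerset.mpr (subset_range_of_rowWeight hc hw)) hc hw

lemma mem_L5 {Q : Finset ℕ} (hc : Q.card = 5) (hw : rowWeight Q ≤ 4) : Q ∈ L5 :=
  classify5 Q (Finset.mem_powerset.mpr (subset_range_of_rowWeight hc hw)) hc hw

lemma oneRunnerBeta_nil (n : ℕ) : oneRunnerBeta [] n = Finset.range n := by
  ext x
  simp only [oneRunnerBeta, Finset.mem_image, Finset.mem_range, List.getD]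
  constructor
  · rintro ⟨t, ht, rfl⟩
    simp only [List.getElem?_nil, Option.getD_none]
    omega
  · intro hx
    refine ⟨n - 1 - x, by omega, ?_⟩
    simp only [List.getElem?_nil, Option.getD_none]
    omega

lemma oneRunnerBeta_11 : oneRunnerBeta [1, 1] 5 = {0, 1, 2, 4, 5} := by decide

lemma mem_display {e : ℕ} (he : 0 < e) (bd : ℕ → ℕ) (lamOf : ℕ → List ℕ) (p : ℕ) :
    p ∈ display e bd lamOf ↔ p / e ∈ oneRunnerBeta (lamOf (p % e)) (bd (p % e)) := by
  unfold display
  simp only [Finset.mem_biUnion, Finset.mem_range, Finset.mem_image]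
  constructor
  · rintro ⟨i, hi, m, hm, rfl⟩
    rw [Nat.add_mul_mod_self_right, Nat.mod_eq_of_lt hi,
      Nat.add_mul_div_right _ _ he, Nat.div_eq_of_lt hi]
    simpa using hm
  · intro h
    exact ⟨p % e, Nat.mod_lt p he, p / e, h, by rw [Nat.mul_comm]; exact Nat.mod_add_div p e⟩

lemma rowSet_display {e i : ℕ} (hi : i < e) (bd : ℕ → ℕ) (lamOf : ℕ → List ℕ) :
    rowSet e (display e bd lamOf) i = oneRunnerBeta (lamOf i) (bd i) := by
  ext m
  rw [mem_rowSet hi, mem_display (by omega) bd lamOf,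
    Nat.add_mul_mod_self_right, Nat.mod_eq_of_lt hi,
    Nat.add_mul_div_right _ _ (by omega : 0 < e), Nat.div_eq_of_lt hi]
  simp

lemma eq_display_of_rowSet {e : ℕ} (he : 0 < e) (B : Finset ℕ) (bd : ℕ → ℕ)
    (lamOf : ℕ → List ℕ)
    (h : ∀ i < e, rowSet e B i = oneRunnerBeta (lamOf i) (bd i)) :
    B = display e bd lamOf := by
  ext p
  rw [mem_display he, ← h (p % e) (Nat.mod_lt p he), mem_rowSet (Nat.mod_lt p he)]
  have hp : p % e + (p / e) * e = p := by rw [Nat.mul_comm]; exact Nat.mod_add_div p e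
  rw [hp]

/-- the unique partition of the block
`⟨4^a, 5^{b−a}, 4^{c−b}, 5^{d−c}, 4^{e−d}⟩` exceptional for both of its
`[4:1]`-pairs (via runners `a` and `c`) is `⟨a_{(1,1)}, c_{(1,1)}⟩`. -/
theorem stmt12 (e a b c d : ℕ) (he : 4 ≤ e) (ha : 0 < a) (hab : a < b) (hbc : b < c)
    (hcd : c < d) (hde : d ≤ e) (bd : ℕ → ℕ)
    (hbd : bd = fun i => if i < a then 4 else if i < b then 5 else
      if i < c then 4 else if i < d then 5 else 4)
    (r : ℕ) (hr : r = (Finset.range e).sum bd)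
    (lam : AbacusPartition) (hlam : inBlock e bd 4 lam)
    (B : Finset ℕ) (hB : B = lam.betaSet r) :
    (2 ≤ epsB e B a ∧ 2 ≤ epsB e B c) ↔
      B = display e bd (fun m => if m = a ∨ m = c then [1, 1] else []) := by
  obtain ⟨hlen, hcnt, hwt⟩ := hlam
  rw [← hr, ← hB] at hcnt hwt
  have he0 : (0:ℕ) < e := by omega
  have hbdval : ∀ i, bd i = if i < a then 4 else if i < b then 5 else
      if i < c then 4 else if i < d then 5 else 4 := fun i => by rw [hbd]
  have hbd45 : ∀ i, bd i = 4 ∨ bd i = 5 := fun i => by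
    rw [hbdval i]; split_ifs <;> simp
  have hcard : ∀ i, i < e → (rowSet e B i).card = bd i := fun i hi => by
    rw [← runnerCount_eq hi, hcnt i hi]
  have hWsum : ∑ i ∈ Finset.range e, rowWeight (rowSet e B i) = 4 := by
    have h1 : ∑ i ∈ Finset.range e, rowWeight (rowSet e B i)
        = ∑ i ∈ Finset.range e, runnerWeight e B i :=
      Finset.sum_congr rfl (fun i hi => (runnerWeight_eq (Finset.mem_range.mp hi) B).symm)
    rw [h1, ← abacusWeight_eq he0 B]; exact hwt
  have hWle : ∀ i, i < e → rowWeight (rowSet e B i) ≤ 4 := by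
    intro i hi
    rw [← hWsum]
    exact Finset.single_le_sum (f := fun i => rowWeight (rowSet e B i))
      (fun _ _ => Nat.zero_le _) (Finset.mem_range.mpr hi)
  have hsub9 : ∀ i, i < e → rowSet e B i ⊆ Finset.range 9 := by
    intro i hi
    refine Finset.Subset.trans (subset_range_of_rowWeight (hcard i hi) (hWle i hi)) ?_
    apply Finset.range_subset_range.mpr
    rcases hbd45 i with h | h <;> omega
  have hsup : 3 ≤ B.sup id := by
    have hBsub : B ⊆ Finset.range (B.sup id + 1) := fun p hp =>
      Finset.mem_range.mpr (Nat.lt_succ_of_le (Finset.le_sup (f := id) hp))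
    have h1 : B.card ≤ B.sup id + 1 := by
      have := Finset.card_le_card hBsub; rwa [Finset.card_range] at this
    have h2 : runnerCount e B 0 ≤ B.card := Finset.card_filter_le _ _
    have h3 : runnerCount e B 0 = 4 := by rw [hcnt 0 he0, hbdval 0, if_pos ha]
    omega
  have hPa : (rowSet e B (a-1)).card = 4 := by
    rw [hcard (a-1) (by omega), hbdval, if_pos (by omega)]
  have hQa : (rowSet e B a).card = 5 := by
    rw [hcard a (by omega), hbdval, if_neg (by omega), if_pos hab]
  have hPc : (rowSet e B (c-1)).card = 4 := by
    rw [hcard (c-1) (by omega), hbdval, if_neg (by omega), if_neg (by omega),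
      if_pos (by omega)]
  have hQc : (rowSet e B c).card = 5 := by
    rw [hcard c (by omega), hbdval, if_neg (by omega), if_neg (by omega),
      if_neg (by omega), if_pos hcd]
  have hS4sub : ({a-1, a, c-1, c} : Finset ℕ) ⊆ Finset.range e := by
    intro x hx
    simp only [Finset.mem_insert, Finset.mem_singleton] at hx
    rcases hx with rfl | rfl | rfl | rfl <;> (apply Finset.mem_range.mpr; omega)
  have hS4sum : ∑ i ∈ ({a-1, a, c-1, c} : Finset ℕ), rowWeight (rowSet e B i)
      = rowWeight (rowSet e B (a-1)) + (rowWeight (rowSet e B a)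
        + (rowWeight (rowSet e B (c-1)) + rowWeight (rowSet e B c))) := by
    rw [Finset.sum_insert (by simp; omega), Finset.sum_insert (by simp; omega),
      Finset.sum_insert (by simp; omega), Finset.sum_singleton]
  have hsum4 : rowWeight (rowSet e B (a-1)) + rowWeight (rowSet e B a)
      + (rowWeight (rowSet e B (c-1)) + rowWeight (rowSet e B c)) ≤ 4 := by
    have h1 : ∑ i ∈ ({a-1, a, c-1, c} : Finset ℕ), rowWeight (rowSet e B i) ≤ 4 := by
      rw [← hWsum]
      exact Finset.sum_le_sum_of_subset hS4sub
    omega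
  have pairApp : ∀ i, 1 ≤ i → i < e → (rowSet e B (i-1)).card = 4 →
      (rowSet e B i).card = 5 →
      rowWeight (rowSet e B (i-1)) + rowWeight (rowSet e B i) ≤ 2 →
      (2 ≤ epsB e B i ↔
        (rowSet e B (i-1) = {0,1,2,3} ∧ rowSet e B i = {0,1,2,4,5})) := by
    intro i h1 hie hc4 hc5 hw2
    rw [epsB_eq h1 hie he B hsup (hsub9 _ (by omega)) (hsub9 _ hie)]
    exact pairA _ (mem_L4 hc4 (by omega)) _ (mem_L5 hc5 (by omega)) hw2
  have hepsa := fun hw2 => pairApp a ha (by omega) hPa hQa hw2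
  have hepsc := fun hw2 => pairApp c (by omega) (by omega) hPc hQc hw2
  constructor
  · rintro ⟨hea, hec⟩
    have hwa : 2 ≤ rowWeight (rowSet e B (a-1)) + rowWeight (rowSet e B a) := by
      by_contra hcon
      push_neg at hcon
      obtain ⟨h1, h2⟩ := (hepsa (by omega)).mp hea
      have e1 : rowWeight (rowSet e B (a-1)) = 0 := by rw [h1]; decide
      have e2 : rowWeight (rowSet e B a) = 2 := by rw [h2]; decide
      omega
    have hwc : 2 ≤ rowWeight (rowSet e B (c-1)) + rowWeight (rowSet e B c) := by
      by_contra hcon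
      push_neg at hcon
      obtain ⟨h1, h2⟩ := (hepsc (by omega)).mp hec
      have e1 : rowWeight (rowSet e B (c-1)) = 0 := by rw [h1]; decide
      have e2 : rowWeight (rowSet e B c) = 2 := by rw [h2]; decide
      omega
    obtain ⟨hP1, hQ1⟩ := (hepsa (by omega)).mp hea
    obtain ⟨hP2, hQ2⟩ := (hepsc (by omega)).mp hec
    have hrest : ∀ i, i < e → i ≠ a-1 → i ≠ a → i ≠ c-1 → i ≠ c →
        rowWeight (rowSet e B i) = 0 := by
      intro i hi n1 n2 n3 n4
      have hS4v : ∑ i ∈ ({a-1, a, c-1, c} : Finset ℕ), rowWeight (rowSet e B i) = 4 := by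
        rw [hS4sum, hP1, hQ1, hP2, hQ2]; decide
      have htot : ∑ i ∈ Finset.range e \ ({a-1, a, c-1, c} : Finset ℕ),
            rowWeight (rowSet e B i)
          + ∑ i ∈ ({a-1, a, c-1, c} : Finset ℕ), rowWeight (rowSet e B i)
          = ∑ i ∈ Finset.range e, rowWeight (rowSet e B i) :=
        Finset.sum_sdiff hS4sub
      have hz : ∑ i ∈ Finset.range e \ ({a-1, a, c-1, c} : Finset ℕ),
          rowWeight (rowSet e B i) = 0 := by omega
      refine Finset.sum_eq_zero_iff.mp hz i ?_
      simp only [Finset.mem_sdiff, Finset.mem_range, Finset.mem_insert,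
        Finset.mem_singleton]
      omega
    apply eq_display_of_rowSet he0 B bd
    intro i hi
    show rowSet e B i = oneRunnerBeta (if i = a ∨ i = c then [1, 1] else []) (bd i)
    by_cases hia : i = a
    · subst hia
      rw [if_pos (Or.inl rfl), hbdval, if_neg (by omega), if_pos hab,
        oneRunnerBeta_11, hQ1]
    by_cases hic : i = c
    · subst hic
      rw [if_pos (Or.inr rfl), hbdval, if_neg (by omega), if_neg (by omega),
        if_neg (by omega), if_pos hcd, oneRunnerBeta_11, hQ2]
    rw [if_neg (by tauto), oneRunnerBeta_nil]
    by_cases hia1 : i = a - 1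
    · subst hia1
      rw [hP1, hbdval, if_pos (by omega)]
      decide
    by_cases hic1 : i = c - 1
    · subst hic1
      rw [hP2, hbdval, if_neg (by omega), if_neg (by omega), if_pos (by omega)]
      decide
    rw [eq_range_of_rowWeight_zero (hrest i hi hia1 hia hic1 hic), hcard i hi]
  · intro hdisp
    have key : ∀ i, i < e → rowSet e B i =
        oneRunnerBeta (if i = a ∨ i = c then [1, 1] else []) (bd i) := by
      intro i hi
      rw [hdisp, rowSet_display hi]
    have hrsa1 : rowSet e B (a-1) = {0,1,2,3} := by
      rw [key (a-1) (by omega), if_neg (by omega), oneRunnerBeta_nil, hbdval,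
        if_pos (by omega)]
      decide
    have hrsa : rowSet e B a = {0,1,2,4,5} := by
      rw [key a (by omega), if_pos (Or.inl rfl), hbdval, if_neg (by omega),
        if_pos hab, oneRunnerBeta_11]
    have hrsc1 : rowSet e B (c-1) = {0,1,2,3} := by
      rw [key (c-1) (by omega), if_neg (by omega), oneRunnerBeta_nil, hbdval,
        if_neg (by omega), if_neg (by omega), if_pos (by omega)]
      decide
    have hrsc : rowSet e B c = {0,1,2,4,5} := by
      rw [key c (by omega), if_pos (Or.inr rfl), hbdval, if_neg (by omega),
        if_neg (by omega), if_neg (by omega), if_pos hcd, oneRunnerBeta_11]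
    constructor
    · rw [epsB_eq ha (by omega) he B hsup (hsub9 _ (by omega)) (hsub9 _ (by omega)),
        hrsa1, hrsa]
      decide
    · rw [epsB_eq (by omega) (by omega) he B hsup (hsub9 _ (by omega)) (hsub9 _ (by omega)),
        hrsc1, hrsc]
      decide
end

section
/- Let e = 5, λ = (10,6,5,2,1,1) and μ = (15,3,3,2,2). Then λ and μ have the same 5-core and the same 5-weight, namely 5; the induced 5-sequences with 10 beads are s(λ)_{10} = (19,14,14,12,9) and s(μ)_{10} = (24,19,14,11,10); μ strictly dominates λ in the dominance order; yet μ is not greater than λ in the product order (since the componentwise inequality s(μ)_{10} ≥ s(λ)_{10} fails, as 11 < 12). Hence the dominance order between two partitions of the same 5-core and 5-weight does not imply the product order. -/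
section Aux

lemma sort_eq_of_sorted (s : Multiset ℕ) (l : List ℕ) (h : (↑l : Multiset ℕ) = s)
    (hl : l.Pairwise (· ≤ ·)) : s.sort (· ≤ ·) = l := by
  refine List.Perm.eq_of_pairwise' (Multiset.pairwise_sort s _) hl ?_
  exact Multiset.coe_eq_coe.mp (by rw [Multiset.sort_eq, h])

lemma betaSet_succ (lam : AbacusPartition) (r : ℕ) (h : lam.len ≤ r) :
    lam.betaSet (r + 1) = insert 0 ((lam.betaSet r).image (· + 1)) := by
  ext x
  simp only [AbacusPartition.betaSet, Finset.mem_insert, Finset.mem_image, Finset.mem_range]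
  constructor
  · rintro ⟨i, hi, rfl⟩
    rcases Nat.lt_or_ge i r with hir | hir
    · exact Or.inr ⟨lam.parts i + (r - 1 - i), ⟨i, hir, rfl⟩, by omega⟩
    · have hz : lam.parts i = 0 := lam.zero_of_ge i (by omega)
      left
      omega
  · rintro (rfl | ⟨a, ⟨i, hi, rfl⟩, rfl⟩)
    · have hz : lam.parts r = 0 := lam.zero_of_ge r h
      exact ⟨r, by omega, by omega⟩
    · exact ⟨i, by omega, by omega⟩

lemma beadWeight_shift (B : Finset ℕ) (p : ℕ) :
    beadWeight 5 (insert 0 (B.image (· + 1))) (p + 1) = beadWeight 5 B p := by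
  unfold beadWeight
  rw [show ((Finset.range (p+1)).filter
        (fun q => q % 5 = (p+1) % 5 ∧ q ∉ insert 0 (B.image (· + 1)))) =
      ((Finset.range p).filter (fun q => q % 5 = p % 5 ∧ q ∉ B)).image (· + 1) from ?_]
  · exact Finset.card_image_of_injective _ (fun a b => by omega)
  · ext q
    simp only [Finset.mem_filter, Finset.mem_range, Finset.mem_image, Finset.mem_insert]
    constructor
    · rintro ⟨hq, hmod, hnot⟩
      push_neg at hnot
      obtain ⟨h0, hnB⟩ := hnot
      obtain ⟨b, rfl⟩ : ∃ b, q = b + 1 := ⟨q - 1, by omega⟩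
      exact ⟨b, ⟨by omega, by omega, fun hb => hnB b hb rfl⟩, rfl⟩
    · rintro ⟨b, ⟨hb, hmod, hnB⟩, rfl⟩
      refine ⟨by omega, by omega, ?_⟩
      rintro (h0 | ⟨a, ha, hab⟩)
      · omega
      · have : a = b := by omega
        exact hnB (this ▸ ha)

lemma beadWeight_le (B : Finset ℕ) (p : ℕ) : beadWeight 5 B p ≤ p / 5 := by
  unfold beadWeight
  calc ((Finset.range p).filter (fun q => q % 5 = p % 5 ∧ q ∉ B)).card
      ≤ ((Finset.range (p / 5)).image (fun i => p % 5 + i * 5)).card := by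
        apply Finset.card_le_card
        intro q hq
        simp only [Finset.mem_filter, Finset.mem_range] at hq
        simp only [Finset.mem_image, Finset.mem_range]
        exact ⟨q / 5, by omega, by omega⟩
    _ ≤ (Finset.range (p / 5)).card := Finset.card_image_le
    _ = p / 5 := Finset.card_range _

lemma inducedSeq_shift (B : Finset ℕ) :
    inducedSeq 5 (insert 0 (B.image (· + 1))) = (inducedSeq 5 B).map (· + 1) := by
  have h0 : (0 : ℕ) ∉ B.image (· + 1) := by
    simp only [Finset.mem_image]
    rintro ⟨a, _, h⟩; omega
  unfold inducedSeq
  rw [Finset.insert_val_of_notMem h0, Finset.image_val,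
      Multiset.dedup_eq_self.mpr (by
        apply Multiset.Nodup.map (fun a b => by omega)
        exact B.nodup),
      Multiset.cons_bind, Multiset.bind_map, Multiset.map_bind]
  have hw0 : beadWeight 5 (insert 0 (B.image (· + 1))) 0 = 0 := by
    unfold beadWeight
    simp
  rw [hw0]
  simp only [Multiset.range_zero, Multiset.map_zero, zero_add]
  refine Multiset.bind_congr (fun p hp => ?_)
  rw [beadWeight_shift]
  rw [Multiset.map_map]
  apply Multiset.map_congr rfl
  intro m hm
  simp only [Multiset.mem_range] at hm
  have h1 := beadWeight_le B p
  simp only [Function.comp_apply]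
  have : m * 5 ≤ p := by
    have : m < p / 5 := by omega
    omega
  omega

lemma inducedSeq_betaSet_add (lam : AbacusPartition) (h : lam.len ≤ 10) (k : ℕ) :
    inducedSeq 5 (lam.betaSet (10 + k)) = (inducedSeq 5 (lam.betaSet 10)).map (· + k) := by
  induction k with
  | zero => simp
  | succ n ih =>
    rw [show 10 + (n + 1) = (10 + n) + 1 from rfl,
        betaSet_succ lam (10 + n) (by omega), inducedSeq_shift, ih, Multiset.map_map]
    apply Multiset.map_congr rfl
    intro x _
    simp only [Function.comp_apply]
    omega

lemma sort_map_add (l : List ℕ) (hl : l.Pairwise (· ≤ ·)) (k : ℕ) :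
    ((↑l : Multiset ℕ).map (· + k)).sort (· ≤ ·) = l.map (· + k) := by
  apply sort_eq_of_sorted
  · rw [Multiset.map_coe]
  · exact List.Pairwise.map _ (fun a b hab => by omega) hl

end Aux

/-- for `e = 5`, `λ = (10,6,5,2,1,1)` and `μ = (15,3,3,2,2)` have the
same 5-core and 5-weight 5, induced 5-sequences `(19,14,14,12,9)` and
`(24,19,14,11,10)` with 10 beads, `μ` strictly dominates `λ`, yet the componentwise
inequality of induced sequences fails and `μ` is not greater than `λ` in the
product order. -/


theorem stmt19 (lam mu : AbacusPartition)
    (hlam : lam.parts = fun i => [10, 6, 5, 2, 1, 1].getD i 0) (hlamlen : lam.len = 6)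
    (hmu : mu.parts = fun i => [15, 3, 3, 2, 2].getD i 0) (hmulen : mu.len = 5) :
    coreBeta 5 (lam.betaSet 10) = coreBeta 5 (mu.betaSet 10) ∧
    eWeight 5 lam = 5 ∧ eWeight 5 mu = 5 ∧
    inducedSeq 5 (lam.betaSet 10) = (↑[19, 14, 14, 12, 9] : Multiset ℕ) ∧
    inducedSeq 5 (mu.betaSet 10) = (↑[24, 19, 14, 11, 10] : Multiset ℕ) ∧
    (∀ m, (Finset.range m).sum lam.parts ≤ (Finset.range m).sum mu.parts) ∧
    lam.parts ≠ mu.parts ∧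
    ¬ List.Forall₂ (· ≤ ·) ((inducedSeq 5 (lam.betaSet 10)).sort (· ≤ ·))
        ((inducedSeq 5 (mu.betaSet 10)).sort (· ≤ ·)) ∧
    ¬ ProdLE 5 lam mu := by
  
  have e1 : (↑[19,14,14,12,9] : Multiset ℕ) = (↑[9,12,14,14,19] : Multiset ℕ) := by decide
  have e2 : (↑[24,19,14,11,10] : Multiset ℕ) = (↑[10,11,14,19,24] : Multiset ℕ) := by decide
  have hBlam : inducedSeq 5 (lam.betaSet 10) = (↑[19, 14, 14, 12, 9] : Multiset ℕ) := by
    simp only [inducedSeq, AbacusPartition.betaSet, hlam]; decide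
  have hBmu : inducedSeq 5 (mu.betaSet 10) = (↑[24, 19, 14, 11, 10] : Multiset ℕ) := by
    simp only [inducedSeq, AbacusPartition.betaSet, hmu]; decide
  have hslam : (inducedSeq 5 (lam.betaSet 10)).sort (· ≤ ·) = [9,12,14,14,19] := by
    rw [hBlam, e1]; exact sort_eq_of_sorted _ _ rfl (by decide)
  have hsmu : (inducedSeq 5 (mu.betaSet 10)).sort (· ≤ ·) = [10,11,14,19,24] := by
    rw [hBmu, e2]; exact sort_eq_of_sorted _ _ rfl (by decide)
  refine ⟨?_, ?_, ?_, hBlam, hBmu, ?_, ?_, ?_, ?_⟩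
  · simp only [coreBeta, runnerCount, AbacusPartition.betaSet, hlam, hmu]; decide
  · simp only [eWeight, abacusWeight, beadWeight, AbacusPartition.betaSet, hlam, hlamlen]; decide
  · simp only [eWeight, abacusWeight, beadWeight, AbacusPartition.betaSet, hmu, hmulen]; decide
  · intro m
    rcases le_or_gt m 6 with hm | hm
    · interval_cases m <;> rw [hlam, hmu] <;> decide
    · have h1 : ∑ i ∈ Finset.range m, lam.parts i = ∑ i ∈ Finset.range 6, lam.parts i := by
        refine (Finset.sum_subset (Finset.range_subset_range.mpr hm.le) (fun x _ hx => ?_)).symm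
        rw [hlam]
        exact List.getD_eq_default _ _ (by simp only [List.length]; simp only [Finset.mem_range] at hx; omega)
      have h2 : ∑ i ∈ Finset.range m, mu.parts i = ∑ i ∈ Finset.range 6, mu.parts i := by
        refine (Finset.sum_subset (Finset.range_subset_range.mpr hm.le) (fun x _ hx => ?_)).symm
        rw [hmu]
        exact List.getD_eq_default _ _ (by simp only [List.length]; simp only [Finset.mem_range] at hx; omega)
      rw [h1, h2, hlam, hmu]; decide
  · intro h; rw [hlam, hmu] at h; exact absurd (congrFun h 0) (by decide)
  · intro h
    rw [hslam, hsmu] at h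
    simp only [List.forall₂_cons] at h
    omega
  · rintro ⟨-, -, r0, hfa⟩
    have h10 := hfa (10 + r0) (by omega)
    rw [inducedSeq_betaSet_add lam (by omega) r0,
        inducedSeq_betaSet_add mu (by omega) r0, hBlam, hBmu, e1, e2,
        sort_map_add _ (by decide) r0, sort_map_add _ (by decide) r0] at h10
    simp only [List.map_cons, List.map_nil, List.forall₂_cons] at h10
    omega
end
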